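/- For the convex function h(x) = x log x - (x+1) log(x+1) (extended appropriately for x ≥ 0), its convex conjugate is h*(y) = sup_x { x·y - h(x) } = -log(1 - e^y) for y < 0. -/

import Mathlib

open Real

lemma bound_aux (y x : ℝ) (hy : y < 0) (hx : 0 ≤ x) :
    x * y - (x * Real.log x - (x + 1) * Real.log (x + 1))
      ≤ -Real.log (1 - Real.exp y) := by
  set t := Real.exp y with ht
  have ht0 : 0 < t := Real.exp_pos y
  have ht1 : t < 1 := Real.exp_lt_one_iff.mpr hy
  have h1t : 0 < 1 - t := by linarith
  have hlt : Real.log t = y := Real.log_exp y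
  rcases eq_or_lt_of_le hx with h0 | h0
  · subst h0
    simp only [zero_mul, zero_add, one_mul, Real.log_one, Real.log_zero]
    have : Real.log (1 - t) ≤ 0 := Real.log_nonpos (by linarith) (by linarith)
    linarith
  · have hx1 : (0:ℝ) < x + 1 := by linarith
    have h1 : Real.log (t * (x + 1) / x) ≤ t * (x + 1) / x - 1 :=
      Real.log_le_sub_one_of_pos (by positivity)
    have h2 : Real.log ((1 - t) * (x + 1)) ≤ (1 - t) * (x + 1) - 1 :=
      Real.log_le_sub_one_of_pos (by positivity)
    rw [Real.log_div (by positivity) (ne_of_gt h0),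
        Real.log_mul (ne_of_gt ht0) (ne_of_gt hx1)] at h1
    rw [Real.log_mul (ne_of_gt h1t) (ne_of_gt hx1)] at h2
    have e1 : t * (x + 1) / x - 1 = (t * (x + 1) - x) / x := by field_simp
    rw [e1] at h1
    have h1' : x * (Real.log t + Real.log (x + 1) - Real.log x) ≤ t * (x + 1) - x := by
      have := mul_le_mul_of_nonneg_left h1 (le_of_lt h0)
      rw [mul_div_cancel₀ _ (ne_of_gt h0)] at this
      linarith
    nlinarith [h1', h2, hlt]

/-- The convex conjugate of `h(x) = x log x - (x+1) log (x+1)` on `[0, ∞)`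
(with `h(0) = 0`) is `h*(y) = -log (1 - e^y)` for `y < 0`. -/
theorem conjugate_of_xlogx_minus :
    ∀ y : ℝ, y < 0 →
      (⨆ x : {x : ℝ // 0 ≤ x},
          ((x : ℝ) * y - ((x : ℝ) * Real.log x - ((x : ℝ) + 1) * Real.log ((x : ℝ) + 1))))
        = -Real.log (1 - Real.exp y) := by
  intro y hy
  set t := Real.exp y with ht
  have ht0 : 0 < t := Real.exp_pos y
  have ht1 : t < 1 := Real.exp_lt_one_iff.mpr hy
  have h1t : 0 < 1 - t := by linarith
  have hlt : Real.log t = y := Real.log_exp y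
  have hbdd : BddAbove (Set.range fun x : {x : ℝ // 0 ≤ x} =>
      ((x : ℝ) * y - ((x : ℝ) * Real.log x - ((x : ℝ) + 1) * Real.log ((x : ℝ) + 1)))) := by
    refine ⟨-Real.log (1 - t), ?_⟩
    rintro _ ⟨x, rfl⟩
    exact bound_aux y x hy x.2
  -- the maximizer
  have hxpos : 0 < t / (1 - t) := by positivity
  set xs : {x : ℝ // 0 ≤ x} := ⟨t / (1 - t), le_of_lt hxpos⟩ with hxs
  have hval : ((xs : ℝ) * y - ((xs : ℝ) * Real.log xs - ((xs : ℝ) + 1) * Real.log ((xs : ℝ) + 1)))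
      = -Real.log (1 - t) := by
    have hx1 : (xs : ℝ) + 1 = 1 / (1 - t) := by
      show t / (1 - t) + 1 = 1 / (1 - t)
      field_simp
      ring
    have hlogx : Real.log (xs : ℝ) = y - Real.log (1 - t) := by
      show Real.log (t / (1 - t)) = y - Real.log (1 - t)
      rw [Real.log_div (ne_of_gt ht0) (ne_of_gt h1t), hlt]
    have hlogx1 : Real.log ((xs : ℝ) + 1) = -Real.log (1 - t) := by
      rw [hx1, Real.log_div one_ne_zero (ne_of_gt h1t), Real.log_one]
      ring
    rw [hlogx, hlogx1]
    ring
  apply le_antisymm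
  · exact ciSup_le fun x => bound_aux y x hy x.2
  · calc -Real.log (1 - t) = _ := hval.symm
      _ ≤ _ := le_ciSup hbdd xs
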